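/- Let (X,d) be a metric space and μ a Borel measure on X that is positive and finite on every open ball; fix x₀ ∈ X and write B_ρ := B(x₀,ρ). Let 1 < q < q' and R₀ > 0, and assume there is a constant C ≥ 1 such that μ(B_ρ)/μ(B_σ) ≤ C·(ρ/σ)^{q'} for all 0 < ρ < σ ≤ R₀. Then there exists a constant C' > 0, depending only on q, q' and C, such that for all 0 < r < R ≤ R₀ one has ∫_r^R (ρ/μ(B_ρ))^{1/(q−1)} dρ ≤ C' · ( r^q / μ(B_r) )^{1/(q−1)}; equivalently, ( ∫_r^R (ρ/μ(B_ρ))^{1/(q−1)} dρ )^{1−q} ≥ (C')^{1−q} · μ(B_r)/r^q. -/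

import Mathlib

open MeasureTheory Metric
open scoped ENNReal

/-- **Integral estimate from the proof of Corollary 4.5(b).** If
`μ(B_ρ)/μ(B_σ) ≤ C (ρ/σ)^{q'}` for `0 < ρ < σ ≤ R₀`, with `1 < q < q'`, then
there is `C' > 0` depending only on `q, q', C` with
`∫_r^R (ρ/μ(B_ρ))^{1/(q−1)} dρ ≤ C' (r^q/μ(B_r))^{1/(q−1)}` for all
`0 < r < R ≤ R₀`; equivalently
`(∫_r^R (ρ/μ(B_ρ))^{1/(q−1)} dρ)^{1−q} ≥ (C')^{1−q} μ(B_r)/r^q`. -/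
theorem integral_estimate_below_lower_exponent
    (q q' C : ℝ) (hq : 1 < q) (hqq' : q < q') (hC : 1 ≤ C) :
    ∃ C' : ℝ, 0 < C' ∧
      ∀ (X : Type) [MetricSpace X] [MeasurableSpace X] [BorelSpace X]
        (μ : Measure X) (x₀ : X) (R₀ : ℝ), 0 < R₀ →
        (∀ r : ℝ, 0 < r → 0 < μ (ball x₀ r)) →
        (∀ r : ℝ, μ (ball x₀ r) < ⊤) →
        (∀ ρ σ : ℝ, 0 < ρ → ρ < σ → σ ≤ R₀ →
          μ (ball x₀ ρ) ≤ ENNReal.ofReal (C * (ρ / σ) ^ q') * μ (ball x₀ σ)) →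
        ∀ r R : ℝ, 0 < r → r < R → R ≤ R₀ →
          (∫⁻ ρ in Set.Ioc r R, (ENNReal.ofReal ρ / μ (ball x₀ ρ)) ^ (1 / (q - 1)))
              ≤ ENNReal.ofReal C' *
                  (ENNReal.ofReal (r ^ q) / μ (ball x₀ r)) ^ (1 / (q - 1)) ∧
            ENNReal.ofReal C' ^ (1 - q) * (μ (ball x₀ r) / ENNReal.ofReal (r ^ q))
              ≤ (∫⁻ ρ in Set.Ioc r R,
                  (ENNReal.ofReal ρ / μ (ball x₀ ρ)) ^ (1 / (q - 1))) ^ (1 - q) := by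
  have hq1 : (0:ℝ) < q - 1 := by linarith
  have hq'q : (0:ℝ) < q' - q := by linarith
  have hC0 : (0:ℝ) < C := lt_of_lt_of_le one_pos hC
  set α : ℝ := 1 / (q - 1) with hα
  have hα0 : 0 < α := by positivity
  set e : ℝ := (1 - q') * α with he
  have he1 : e + 1 = -((q' - q) / (q - 1)) := by
    field_simp [he, hα]
    linear_combination (1 - q') * (inv_mul_cancel₀ hq1.ne' : (q - 1)⁻¹ * (q - 1) = 1)
  have he1' : e + 1 < 0 := by
    rw [he1]
    have : 0 < (q' - q) / (q - 1) := by positivity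
    linarith
  have hene : e ≠ -1 := by intro h; rw [h] at he1'; simp at he1'
  refine ⟨C ^ α * ((q - 1) / (q' - q)), by positivity, ?_⟩
  intro X _ _ _ μ x₀ R₀ hR₀ hpos hfin hdoub r R hr hrR hRR₀
  set m : ℝ≥0∞ := μ (ball x₀ r) with hm
  have hm0 : m ≠ 0 := (hpos r hr).ne'
  have hmtop : m ≠ ⊤ := (hfin r).ne
  have hmα0 : m ^ α ≠ 0 := (ENNReal.rpow_pos (hpos r hr) hmtop).ne'
  have hmαtop : m ^ α ≠ ⊤ := ENNReal.rpow_ne_top_of_nonneg hα0.le hmtop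
  set K : ℝ := C ^ α * r ^ (q' * α) with hK
  have hK0 : 0 < K := by positivity
  set g : ℝ → ℝ≥0∞ := fun ρ => ENNReal.ofReal (K * ρ ^ e) * (m ^ α)⁻¹ with hg
  -- pointwise bound
  have key : ∀ ρ ∈ Set.Ioc r R,
      (ENNReal.ofReal ρ / μ (ball x₀ ρ)) ^ (1 / (q - 1)) ≤ g ρ := by
    intro ρ hρ
    obtain ⟨hrρ, hρR⟩ := hρ
    have hρ0 : 0 < ρ := hr.trans hrρ
    have hd := hdoub r ρ hr hrρ (hρR.trans hRR₀)
    set c : ℝ := C * (r / ρ) ^ q' with hc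
    have hc0 : 0 < c := by positivity
    have hcne : ENNReal.ofReal c ≠ 0 := (ENNReal.ofReal_pos.2 hc0).ne'
    have step1 : ENNReal.ofReal ρ / μ (ball x₀ ρ) ≤ ENNReal.ofReal (ρ * c) / m := by
      calc ENNReal.ofReal ρ / μ (ball x₀ ρ)
          = ENNReal.ofReal c * ENNReal.ofReal ρ / (ENNReal.ofReal c * μ (ball x₀ ρ)) :=
            (ENNReal.mul_div_mul_left _ _ hcne ENNReal.ofReal_ne_top).symm
        _ ≤ ENNReal.ofReal c * ENNReal.ofReal ρ / m :=
            ENNReal.div_le_div_left hd _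
        _ = ENNReal.ofReal (ρ * c) / m := by
            rw [← ENNReal.ofReal_mul hc0.le, mul_comm c ρ]
    have step2 := ENNReal.rpow_le_rpow step1 hα0.le
    have hre : (ρ * c) ^ α = K * ρ ^ e := by
      have h1 : ρ * c = (C * r ^ q') * ρ ^ (1 - q') := by
        rw [hc, Real.div_rpow hr.le hρ0.le, Real.rpow_sub hρ0, Real.rpow_one]
        field_simp
      rw [h1, Real.mul_rpow (by positivity) (Real.rpow_nonneg hρ0.le _),
        Real.mul_rpow hC0.le (Real.rpow_nonneg hr.le _),
        ← Real.rpow_mul hr.le, ← Real.rpow_mul hρ0.le, hK, he]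
    calc (ENNReal.ofReal ρ / μ (ball x₀ ρ)) ^ (1 / (q - 1))
        ≤ (ENNReal.ofReal (ρ * c) / m) ^ α := step2
      _ = ENNReal.ofReal ((ρ * c) ^ α) / m ^ α := by
          rw [ENNReal.div_rpow_of_nonneg _ _ hα0.le,
            ENNReal.ofReal_rpow_of_pos (by positivity)]
      _ = g ρ := by rw [hre, hg, div_eq_mul_inv]
  have hgm : Measurable g := by
    apply Measurable.mul_const
    exact ENNReal.measurable_ofReal.comp (by fun_prop)
  have hmono := MeasureTheory.setLIntegral_mono (μ := volume) (s := Set.Ioc r R) hgm key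
  -- compute ∫⁻ g
  have hIg : ∫⁻ ρ in Set.Ioc r R, g ρ
      = (∫⁻ ρ in Set.Ioc r R, ENNReal.ofReal (K * ρ ^ e)) * (m ^ α)⁻¹ :=
    MeasureTheory.lintegral_mul_const' _ _ (by simp [hmα0])
  have hint : IntegrableOn (fun ρ : ℝ => K * ρ ^ e) (Set.Ioc r R) := by
    apply MeasureTheory.IntegrableOn.mono_set _ Set.Ioc_subset_Icc_self
    apply ContinuousOn.integrableOn_Icc
    exact continuousOn_const.mul (ContinuousOn.rpow_const continuousOn_id
      (fun x hx => Or.inl (by rintro rfl; exact absurd hx.1 (not_le.2 hr))))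
  have hnn : 0 ≤ᵐ[volume.restrict (Set.Ioc r R)] fun ρ : ℝ => K * ρ ^ e := by
    refine (ae_restrict_iff' measurableSet_Ioc).2 (ae_of_all _ fun ρ hρ => ?_)
    exact mul_nonneg hK0.le (Real.rpow_nonneg (hr.trans hρ.1).le _)
  have hlin : ∫⁻ ρ in Set.Ioc r R, ENNReal.ofReal (K * ρ ^ e)
      = ENNReal.ofReal (∫ ρ in Set.Ioc r R, K * ρ ^ e) :=
    (MeasureTheory.ofReal_integral_eq_lintegral_ofReal hint hnn).symm
  have hval : ∫ ρ in Set.Ioc r R, K * ρ ^ e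
      = K * ((R ^ (e + 1) - r ^ (e + 1)) / (e + 1)) := by
    rw [MeasureTheory.integral_const_mul, ← intervalIntegral.integral_of_le hrR.le,
      integral_rpow (Or.inr ⟨hene, by
        rw [Set.uIcc_of_le hrR.le]
        intro h
        exact absurd h.1 (not_le.2 hr)⟩)]
  have hsum : q' * α + (e + 1) = q * α := by
    field_simp [he, hα]
    linear_combination -(inv_mul_cancel₀ hq1.ne' : (q - 1)⁻¹ * (q - 1) = 1)
  have hkey : ((q - 1) / (q' - q)) * (e + 1) = -1 := by
    rw [he1]
    field_simp
  have hbound : K * ((R ^ (e + 1) - r ^ (e + 1)) / (e + 1))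
      ≤ (C ^ α * ((q - 1) / (q' - q))) * r ^ (q * α) := by
    have hRpos : (0:ℝ) ≤ R ^ (e + 1) := Real.rpow_nonneg (by linarith) _
    have h2 : (R ^ (e + 1) - r ^ (e + 1)) / (e + 1) ≤ r ^ (e + 1) * ((q - 1) / (q' - q)) := by
      rw [div_le_iff_of_neg he1']
      nlinarith [Real.rpow_nonneg hr.le (e + 1)]
    calc K * ((R ^ (e + 1) - r ^ (e + 1)) / (e + 1))
        ≤ K * (r ^ (e + 1) * ((q - 1) / (q' - q))) :=
          mul_le_mul_of_nonneg_left h2 hK0.le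
      _ = (C ^ α * ((q - 1) / (q' - q))) * (r ^ (q' * α) * r ^ (e + 1)) := by
          rw [hK]; ring
      _ = (C ^ α * ((q - 1) / (q' - q))) * r ^ (q * α) := by
          rw [← Real.rpow_add hr, hsum]
  -- the first inequality
  have hRHS : ENNReal.ofReal ((C ^ α * ((q - 1) / (q' - q))) * r ^ (q * α)) * (m ^ α)⁻¹
      = ENNReal.ofReal (C ^ α * ((q - 1) / (q' - q))) *
          (ENNReal.ofReal (r ^ q) / m) ^ (1 / (q - 1)) := by
    rw [ENNReal.div_rpow_of_nonneg _ _ hα0.le,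
      ENNReal.ofReal_rpow_of_pos (Real.rpow_pos_of_pos hr q),
      ← Real.rpow_mul hr.le,
      ENNReal.ofReal_mul (by positivity), ENNReal.div_eq_inv_mul]
    ring
  have first : (∫⁻ ρ in Set.Ioc r R, (ENNReal.ofReal ρ / μ (ball x₀ ρ)) ^ (1 / (q - 1)))
      ≤ ENNReal.ofReal (C ^ α * ((q - 1) / (q' - q))) *
          (ENNReal.ofReal (r ^ q) / m) ^ (1 / (q - 1)) := by
    calc (∫⁻ ρ in Set.Ioc r R, (ENNReal.ofReal ρ / μ (ball x₀ ρ)) ^ (1 / (q - 1)))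
        ≤ ∫⁻ ρ in Set.Ioc r R, g ρ := hmono
      _ = (∫⁻ ρ in Set.Ioc r R, ENNReal.ofReal (K * ρ ^ e)) * (m ^ α)⁻¹ := hIg
      _ = ENNReal.ofReal (K * ((R ^ (e + 1) - r ^ (e + 1)) / (e + 1))) * (m ^ α)⁻¹ := by
          rw [hlin, hval]
      _ ≤ ENNReal.ofReal ((C ^ α * ((q - 1) / (q' - q))) * r ^ (q * α)) * (m ^ α)⁻¹ :=
          mul_le_mul_left (ENNReal.ofReal_le_ofReal hbound) _
      _ = _ := hRHS
  refine ⟨first, ?_⟩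
  -- second inequality
  set B : ℝ≥0∞ := ENNReal.ofReal (C ^ α * ((q - 1) / (q' - q))) *
      (ENNReal.ofReal (r ^ q) / m) ^ (1 / (q - 1)) with hB
  have hdiv0 : (0:ℝ≥0∞) < ENNReal.ofReal (r ^ q) / m :=
    ENNReal.div_pos (ENNReal.ofReal_pos.2 (Real.rpow_pos_of_pos hr q)).ne' hmtop
  have hdivtop : ENNReal.ofReal (r ^ q) / m ≠ ⊤ :=
    (ENNReal.div_lt_top ENNReal.ofReal_ne_top hm0).ne
  have anti : B ^ (1 - q) ≤ (∫⁻ ρ in Set.Ioc r R,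
      (ENNReal.ofReal ρ / μ (ball x₀ ρ)) ^ (1 / (q - 1))) ^ (1 - q) := by
    rw [show (1 - q) = -(q - 1) by ring, ENNReal.rpow_neg, ENNReal.rpow_neg]
    exact ENNReal.inv_le_inv.2 (ENNReal.rpow_le_rpow first (by linarith))
  have hBeq : B ^ (1 - q) = ENNReal.ofReal (C ^ α * ((q - 1) / (q' - q))) ^ (1 - q) *
      (m / ENNReal.ofReal (r ^ q)) := by
    rw [hB, ENNReal.mul_rpow_of_ne_zero
        (ENNReal.ofReal_pos.2 (by positivity)).ne'
        (ENNReal.rpow_pos hdiv0 hdivtop).ne',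
      ← ENNReal.rpow_mul,
      show (1 / (q - 1)) * (1 - q) = -1 by field_simp; ring,
      ENNReal.rpow_neg_one,
      ENNReal.inv_div (Or.inr ENNReal.ofReal_ne_top)
        (Or.inr (ENNReal.ofReal_pos.2 (Real.rpow_pos_of_pos hr q)).ne')]
  rw [← hBeq]
  exact anti
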